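/- For any nonnegative vector z⁺ on [n] with Σ_{j=1}^{J} Σ_{i ∈ B_j(z⁺)} z⁺(i) ≥ 3/5 where J = log₂(n/32), the following holds: if j is chosen uniformly at random from {1,...,J} and then a set S ⊆ [n] is formed by including each element independently with probability 2^{-j}, then with probability at least 3/(20·J) there exists i ∈ S with z⁺(i) ≥ 2^{-j}. -/

import Mathlib

open scoped Classical BigOperators

lemma sum_powerset_pow {α : Type*} [DecidableEq α] (T : Finset α) (p q : ℝ) :
    ∑ S ∈ T.powerset, p ^ S.card * q ^ (T.card - S.card) = (p + q) ^ T.card := by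
  rw [show (p + q) ^ T.card = ∏ _i ∈ T, (p + q) from (Finset.prod_const _).symm,
    Finset.prod_add]
  refine Finset.sum_congr rfl fun S hS => ?_
  rw [Finset.mem_powerset] at hS
  rw [Finset.prod_const, Finset.prod_const, Finset.card_sdiff_of_subset hS]

lemma key_identity (n : ℕ) (p : ℝ) (A : Finset (Fin n)) :
    ∑ S : Finset (Fin n), p ^ S.card * (1 - p) ^ (n - S.card) *
        (if ∃ i ∈ S, i ∈ A then 1 else 0)
      = 1 - (1 - p) ^ A.card := by
  have htot : ∑ S : Finset (Fin n), p ^ S.card * (1 - p) ^ (n - S.card) = 1 := by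
    have h := sum_powerset_pow (Finset.univ : Finset (Fin n)) p (1 - p)
    simp only [Finset.powerset_univ, Finset.card_univ, Fintype.card_fin] at h
    rw [h, show p + (1 - p) = 1 by ring, one_pow]
  have hsplit : ∀ S : Finset (Fin n),
      p ^ S.card * (1 - p) ^ (n - S.card) * (if ∃ i ∈ S, i ∈ A then 1 else 0)
      = p ^ S.card * (1 - p) ^ (n - S.card)
        - p ^ S.card * (1 - p) ^ (n - S.card) * (if S ⊆ Aᶜ then 1 else 0) := by
    intro S
    by_cases h : ∃ i ∈ S, i ∈ A
    · have : ¬ S ⊆ Aᶜ := by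
        obtain ⟨i, hiS, hiA⟩ := h
        intro hsub; exact (Finset.mem_compl.mp (hsub hiS)) hiA
      simp [h, this]
    · have : S ⊆ Aᶜ := fun i hi => Finset.mem_compl.mpr (fun hiA => h ⟨i, hi, hiA⟩)
      simp [h, this]
  have hfilter : (Finset.univ.filter (fun S : Finset (Fin n) => S ⊆ Aᶜ)) = Aᶜ.powerset := by
    ext S; simp [Finset.mem_powerset]
  have hcompl : ∑ S : Finset (Fin n), p ^ S.card * (1 - p) ^ (n - S.card) *
      (if S ⊆ Aᶜ then 1 else 0) = (1 - p) ^ A.card := by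
    have h1 : ∑ S : Finset (Fin n), p ^ S.card * (1 - p) ^ (n - S.card) *
        (if S ⊆ Aᶜ then 1 else 0)
        = ∑ S ∈ Aᶜ.powerset, p ^ S.card * (1 - p) ^ (n - S.card) := by
      rw [← hfilter, Finset.sum_filter]
      refine Finset.sum_congr rfl fun S _ => ?_
      split <;> simp
    rw [h1]
    have h2 : ∑ S ∈ Aᶜ.powerset, p ^ S.card * (1 - p) ^ (n - S.card)
        = (1 - p) ^ A.card *
          ∑ S ∈ Aᶜ.powerset, p ^ S.card * (1 - p) ^ (Aᶜ.card - S.card) := by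
      rw [Finset.mul_sum]
      refine Finset.sum_congr rfl fun S hS => ?_
      rw [Finset.mem_powerset] at hS
      have hcard : S.card ≤ Aᶜ.card := Finset.card_le_card hS
      have hAc : Aᶜ.card = n - A.card := by simp [Finset.card_compl]
      have hA : A.card ≤ n := by simpa using A.card_le_univ
      have hn : n - S.card = (Aᶜ.card - S.card) + A.card := by omega
      rw [hn, pow_add]; ring
    rw [h2, sum_powerset_pow, show p + (1 - p) = 1 by ring, one_pow, mul_one]
  rw [Finset.sum_congr rfl (fun S _ => hsplit S), Finset.sum_sub_distrib, htot, hcompl]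

lemma bernoulli_bound (p : ℝ) (hp0 : 0 ≤ p) (hp1 : p ≤ 1) (b : ℕ) :
    (1 - p) ^ b ≤ 1 / (1 + p * b) := by
  have hpos : (0:ℝ) < 1 + p * b := by positivity
  rw [le_div_iff₀ hpos]
  have h1 : 1 + p * b ≤ (1 + p) ^ b := by
    have := one_add_mul_le_pow (a := p) (by linarith) b
    linarith [this]
  have h2 : (1 - p) ^ b * (1 + p * b) ≤ (1 - p) ^ b * (1 + p) ^ b := by
    apply mul_le_mul_of_nonneg_left h1 (pow_nonneg (by linarith) b)
  have h3 : (1 - p) ^ b * (1 + p) ^ b = (1 - p ^ 2) ^ b := by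
    rw [← mul_pow]; ring_nf
  have h4 : (1 - p ^ 2) ^ b ≤ 1 := by
    apply pow_le_one₀ <;> nlinarith
  linarith

lemma per_j_bound (n j : ℕ) (hj : 1 ≤ j) (z : Fin n → ℝ) (hz : ∀ i, 0 ≤ z i) :
    ∑ S : Finset (Fin n),
        ((1:ℝ)/2^j)^S.card * (1 - (1:ℝ)/2^j)^(n - S.card) *
          (if ∃ i ∈ S, (1:ℝ)/2^j ≤ z i then 1 else 0)
      ≥ (∑ i ∈ Finset.univ.filter
          (fun i => (1:ℝ)/2^j ≤ z i ∧ z i < (1:ℝ)/2^(j-1)), z i)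
        / (2 + ∑ i ∈ Finset.univ.filter
          (fun i => (1:ℝ)/2^j ≤ z i ∧ z i < (1:ℝ)/2^(j-1)), z i) := by
  set p : ℝ := (1:ℝ)/2^j with hp
  have h2j : (1:ℝ) ≤ 2^j := one_le_pow₀ (by norm_num)
  have hp0 : 0 ≤ p := by positivity
  have hp1 : p ≤ 1 := by rw [hp, div_le_one (by positivity)]; exact h2j
  set A : Finset (Fin n) := Finset.univ.filter (fun i => p ≤ z i) with hA
  set B : Finset (Fin n) := Finset.univ.filter
      (fun i => p ≤ z i ∧ z i < (1:ℝ)/2^(j-1)) with hB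
  set m : ℝ := ∑ i ∈ B, z i with hmdef
  have hBA : B ⊆ A := by
    intro i hi
    rw [hB, Finset.mem_filter] at hi
    rw [hA, Finset.mem_filter]
    exact ⟨hi.1, hi.2.1⟩
  have hm0 : 0 ≤ m := Finset.sum_nonneg fun i _ => hz i
  have hideal : ∑ S : Finset (Fin n),
      p^S.card * (1 - p)^(n - S.card) *
        (if ∃ i ∈ S, p ≤ z i then 1 else 0) = 1 - (1 - p) ^ A.card := by
    rw [← key_identity n p A]
    refine Finset.sum_congr rfl fun S _ => ?_
    congr 1
    simp [hA]
  rw [hideal]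
  -- bound z i < 2 * p on B
  have h2p : (1:ℝ)/2^(j-1) = 2 * p := by
    rw [hp]
    rw [show (2:ℝ)^j = 2^(j-1) * 2 by rw [← pow_succ]; congr 1; omega]
    field_simp
  have hmB : m ≤ (B.card : ℝ) * (2 * p) := by
    have := Finset.sum_le_card_nsmul B z (2 * p) (fun i hi => by
      rw [hB, Finset.mem_filter] at hi
      have := hi.2.2
      rw [h2p] at this
      linarith)
    simpa [nsmul_eq_mul] using this
  set x : ℝ := p * B.card with hx
  have hx0 : 0 ≤ x := by positivity
  have hmx : m / 2 ≤ x := by rw [hx]; nlinarith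
  have step1 : (1 - p) ^ A.card ≤ (1 - p) ^ B.card :=
    pow_le_pow_of_le_one (by linarith) (by linarith) (Finset.card_le_card hBA)
  have step2 : (1 - p) ^ B.card ≤ 1 / (1 + x) := bernoulli_bound p hp0 hp1 B.card
  have step3 : 1 / (1 + x) ≤ 1 / (1 + m / 2) :=
    one_div_le_one_div_of_le (by linarith) (by linarith)
  have step4 : 1 - 1 / (1 + m / 2) = m / (2 + m) := by
    field_simp
    ring
  linarith

theorem uniform_key_lemma (n J : ℕ) (hJ : 1 ≤ J) (hJpow : (2:ℝ)^J = (n:ℝ)/32)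
    (z : Fin n → ℝ) (hz : ∀ i, 0 ≤ z i)
    (hmass : ∑ j ∈ Finset.Icc 1 J,
        ∑ i ∈ Finset.univ.filter
          (fun i => (1:ℝ)/2^j ≤ z i ∧ z i < (1:ℝ)/2^(j-1)), z i ≥ 3/5) :
    (1/(J:ℝ)) * ∑ j ∈ Finset.Icc 1 J,
        ∑ S : Finset (Fin n),
          ((1:ℝ)/2^j)^S.card * (1 - (1:ℝ)/2^j)^(n - S.card) *
            (if ∃ i ∈ S, (1:ℝ)/2^j ≤ z i then 1 else 0)
      ≥ 3 / (20 * (J:ℝ)) := by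
  set m : ℕ → ℝ := fun j => ∑ i ∈ Finset.univ.filter
      (fun i => (1:ℝ)/2^j ≤ z i ∧ z i < (1:ℝ)/2^(j-1)), z i with hm
  set P : ℕ → ℝ := fun j => ∑ S : Finset (Fin n),
      ((1:ℝ)/2^j)^S.card * (1 - (1:ℝ)/2^j)^(n - S.card) *
        (if ∃ i ∈ S, (1:ℝ)/2^j ≤ z i then 1 else 0) with hPdef
  have hm0 : ∀ j, 0 ≤ m j := fun j => Finset.sum_nonneg fun i _ => hz i
  have hP : ∀ j ∈ Finset.Icc 1 J, P j ≥ m j / (2 + m j) := by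
    intro j hjmem
    rw [Finset.mem_Icc] at hjmem
    exact per_j_bound n j hjmem.1 z hz
  have hPnonneg : ∀ j ∈ Finset.Icc 1 J, 0 ≤ P j := by
    intro j hjmem
    have := hP j hjmem
    have h1 : 0 ≤ m j / (2 + m j) := div_nonneg (hm0 j) (by linarith [hm0 j])
    linarith
  have hJ0 : (0:ℝ) < J := by exact_mod_cast hJ
  suffices h : ∑ j ∈ Finset.Icc 1 J, P j ≥ 3/20 by
    rw [ge_iff_le, show (3:ℝ) / (20 * J) = (1/J) * (3/20) by field_simp]
    exact mul_le_mul_of_nonneg_left h (by positivity)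
  by_cases hbig : ∃ j0 ∈ Finset.Icc 1 J, 2 ≤ m j0
  · obtain ⟨j0, hj0, h2⟩ := hbig
    have hsingle : P j0 ≤ ∑ j ∈ Finset.Icc 1 J, P j :=
      Finset.single_le_sum hPnonneg hj0
    have hP0 : P j0 ≥ 1/2 := by
      have h1 : m j0 / (2 + m j0) ≥ 1/2 := by
        rw [ge_iff_le, le_div_iff₀ (by linarith [hm0 j0])]
        linarith
      linarith [hP j0 hj0]
    linarith
  · push_neg at hbig
    have hstep : ∀ j ∈ Finset.Icc 1 J, m j / 4 ≤ P j := by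
      intro j hjmem
      have hlt : m j < 2 := hbig j hjmem
      have h1 : m j / 4 ≤ m j / (2 + m j) := by
        apply div_le_div_of_nonneg_left (hm0 j) (by linarith [hm0 j])
        linarith
      linarith [hP j hjmem]
    have hsum : ∑ j ∈ Finset.Icc 1 J, m j / 4 ≤ ∑ j ∈ Finset.Icc 1 J, P j :=
      Finset.sum_le_sum hstep
    have heq : ∑ j ∈ Finset.Icc 1 J, m j / 4
        = (∑ j ∈ Finset.Icc 1 J, m j) / 4 := by
      rw [Finset.sum_div]
    linarith [hmass]
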